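/- Let (cₙ) be a sequence of complex numbers with cₙ → 0 as n → ∞. Then there exists a sequence of signs (xₙ) ∈ {-1,1}^ℕ such that the series ∑ xₙcₙ converges and ‖∑_{n=1}^∞ xₙcₙ‖ ≤ 5 · sup_n ‖cₙ‖. -/

import Mathlib

open Complex Finset Filter Topology

noncomputable section SignSeries

/-- the ℓ∞ seminorm on ℂ -/
def NN (z : ℂ) : ℝ := max |z.re| |z.im|

lemma NN_nonneg (z : ℂ) : 0 ≤ NN z := le_trans (abs_nonneg _) (le_max_left _ _)

lemma NN_zero : NN 0 = 0 := by simp [NN]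

lemma NN_add (a b : ℂ) : NN (a + b) ≤ NN a + NN b := by
  unfold NN
  apply max_le
  · calc |(a+b).re| = |a.re + b.re| := by simp
      _ ≤ |a.re| + |b.re| := abs_add_le _ _
      _ ≤ _ := add_le_add (le_max_left _ _) (le_max_left _ _)
  · calc |(a+b).im| = |a.im + b.im| := by simp
      _ ≤ |a.im| + |b.im| := abs_add_le _ _
      _ ≤ _ := add_le_add (le_max_right _ _) (le_max_right _ _)

lemma NN_smul_le (t : ℝ) (a : ℂ) : NN (t • a) ≤ |t| * NN a := by
  unfold NN
  apply max_le
  · rw [Complex.smul_re, smul_eq_mul, abs_mul]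
    exact mul_le_mul_of_nonneg_left (le_max_left _ _) (abs_nonneg _)
  · rw [Complex.smul_im, smul_eq_mul, abs_mul]
    exact mul_le_mul_of_nonneg_left (le_max_right _ _) (abs_nonneg _)

lemma NN_sum {s : Finset ℕ} (f : ℕ → ℂ) :
    NN (∑ i ∈ s, f i) ≤ ∑ i ∈ s, NN (f i) :=
  Finset.le_sum_of_subadditive NN NN_zero.le NN_add s f

lemma abs_le_two_NN (z : ℂ) : ‖z‖ ≤ 2 * NN z := by
  calc ‖z‖ ≤ |z.re| + |z.im| := Complex.norm_le_abs_re_add_abs_im z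
    _ ≤ NN z + NN z := add_le_add (le_max_left _ _) (le_max_right _ _)
    _ = 2 * NN z := by ring

def fracSet (lam : ℕ → ℝ) (n : ℕ) : Finset ℕ := (range n).filter (fun i => |lam i| < 1)

def SInv (v : ℕ → ℂ) (n : ℕ) (lam : ℕ → ℝ) : Prop :=
  (∀ i, |lam i| ≤ 1) ∧ (∑ i ∈ range n, lam i • v i = 0) ∧
    (fracSet lam n).card ≤ 2 ∧ (∀ i, n ≤ i → lam i = 0)

lemma sinv_zero (v : ℕ → ℂ) : SInv v 0 (fun _ => 0) := by
  refine ⟨fun i => by norm_num, by simp, ?_, fun i _ => rfl⟩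
  simp [fracSet]

lemma step_ex (v : ℕ → ℂ) (n : ℕ) (lam : ℕ → ℝ) (h : SInv v n lam) :
    ∃ lam' : ℕ → ℝ, SInv v (n+1) lam' ∧ ∀ i, |lam i| = 1 → lam' i = lam i := by
  classical
  obtain ⟨h1, h2, h3, h4⟩ := h
  have hlamn : lam n = 0 := h4 n le_rfl
  have hsum1 : ∑ i ∈ range (n+1), lam i • v i = 0 := by
    rw [Finset.sum_range_succ, hlamn, h2]; simp
  set F : Finset ℕ := (range (n+1)).filter (fun i => |lam i| < 1) with hF
  have hFsub : F ⊆ insert n (fracSet lam n) := by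
    intro i hi
    rw [hF, mem_filter, mem_range] at hi
    rcases Nat.lt_succ_iff_lt_or_eq.mp hi.1 with h' | h'
    · exact mem_insert_of_mem (by rw [fracSet, mem_filter, mem_range]; exact ⟨h', hi.2⟩)
    · exact h' ▸ mem_insert_self _ _
  have hFcard : F.card ≤ 3 := by
    calc F.card ≤ (insert n (fracSet lam n)).card := card_le_card hFsub
      _ ≤ (fracSet lam n).card + 1 := card_insert_le _ _
      _ ≤ 3 := by omega
  by_cases hc : F.card ≤ 2
  · exact ⟨lam, ⟨h1, hsum1, by rwa [show fracSet lam (n+1) = F from rfl],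
      fun i hi => h4 i (by omega)⟩, fun i _ => rfl⟩
  · have hcard3 : F.card = 3 := by omega
    -- linear dependence of three vectors in ℂ over ℝ
    have hnli : ¬ LinearIndependent ℝ (fun i : {x // x ∈ F} => v i) := by
      intro hli
      have := hli.fintype_card_le_finrank
      rw [Fintype.card_coe, hcard3, Complex.finrank_real_complex] at this
      omega
    obtain ⟨g, hg0, i₁, hi₁⟩ := Fintype.not_linearIndependent_iff.mp hnli
    set G : ℕ → ℝ := fun i => if h : i ∈ F then g ⟨i, h⟩ else 0 with hG
    have hGval : ∀ (x : {x // x ∈ F}), G x.1 = g x := fun x => dif_pos x.2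
    have hGsum : ∑ i ∈ F, G i • v i = 0 := by
      rw [← Finset.sum_attach F (fun i => G i • v i)]
      calc ∑ x ∈ F.attach, G x.1 • v x.1 = ∑ x ∈ F.attach, g x • v x.1 := by
            exact Finset.sum_congr rfl fun x _ => by rw [hGval]
        _ = ∑ x : {x // x ∈ F}, g x • v x.1 := by rw [Finset.univ_eq_attach]
        _ = 0 := hg0
    have hGi₁ : G i₁.1 ≠ 0 := by rw [hGval]; exact hi₁
    set F' : Finset ℕ := F.filter (fun i => G i ≠ 0) with hF'
    have hne : F'.Nonempty := ⟨i₁.1, by rw [hF', mem_filter]; exact ⟨i₁.2, hGi₁⟩⟩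
    have hFmem : ∀ i ∈ F, -1 < lam i ∧ lam i < 1 := by
      intro i hi
      rw [hF, mem_filter] at hi
      exact abs_lt.mp hi.2
    set q : ℕ → ℝ := fun i => if 0 < G i then (1 - lam i) / G i else (-1 - lam i) / G i with hq
    have hqpos : ∀ i ∈ F', 0 < q i := by
      intro i hi
      rw [hF', mem_filter] at hi
      obtain ⟨hiF, hGi⟩ := hi
      obtain ⟨hl1, hl2⟩ := hFmem i hiF
      simp only [hq]
      by_cases hgt : 0 < G i
      · rw [if_pos hgt]; exact div_pos (by linarith) hgt
      · rw [if_neg hgt]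
        have hlt : G i < 0 := lt_of_le_of_ne (not_lt.mp hgt) hGi
        exact div_pos_iff.mpr (Or.inr ⟨by linarith, hlt⟩)
    set t : ℝ := F'.inf' hne q with ht
    have ht0 : 0 ≤ t := Finset.le_inf' hne q (fun i hi => (hqpos i hi).le)
    have htle : ∀ i ∈ F', t ≤ q i := fun i hi => Finset.inf'_le q hi
    set lam' : ℕ → ℝ := fun i => lam i + t * G i with hlam'
    have hGoff : ∀ i, i ∉ F → G i = 0 := by
      intro i hi; rw [hG]; simp only [hi, dif_neg, not_false_iff]
    have hoff : ∀ i, i ∉ F → lam' i = lam i := by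
      intro i hi; simp only [hlam']; rw [hGoff i hi, mul_zero, add_zero]
    -- bounds
    have hb : ∀ i, |lam' i| ≤ 1 := by
      intro i
      by_cases hiF : i ∈ F
      · obtain ⟨hl1, hl2⟩ := hFmem i hiF
        by_cases hGi : G i = 0
        · simp only [hlam']; rw [hGi, mul_zero, add_zero]; exact (abs_lt.mpr ⟨hl1, hl2⟩).le
        · have hiF' : i ∈ F' := by rw [hF', mem_filter]; exact ⟨hiF, hGi⟩
          have hti := htle i hiF'
          simp only [hlam']
          by_cases hgt : 0 < G i
          · have hqi : q i = (1 - lam i) / G i := by simp only [hq, if_pos hgt]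
            have hub : lam i + t * G i ≤ 1 := by
              have : t * G i ≤ q i * G i := mul_le_mul_of_nonneg_right hti hgt.le
              rw [hqi, div_mul_cancel₀ _ (ne_of_gt hgt)] at this
              linarith
            have hlb : -1 ≤ lam i + t * G i := by nlinarith
            exact abs_le.mpr ⟨hlb, hub⟩
          · have hlt : G i < 0 := lt_of_le_of_ne (not_lt.mp hgt) hGi
            have hqi : q i = (-1 - lam i) / G i := by simp only [hq, if_neg hgt]
            have hlb : -1 ≤ lam i + t * G i := by
              have : q i * G i ≤ t * G i := mul_le_mul_of_nonpos_right hti hlt.le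
              rw [hqi, div_mul_cancel₀ _ (ne_of_lt hlt)] at this
              linarith
            have hub : lam i + t * G i ≤ 1 := by nlinarith
            exact abs_le.mpr ⟨hlb, hub⟩
      · rw [hoff i hiF]; exact h1 i
    -- sum preserved
    have hsum' : ∑ i ∈ range (n+1), lam' i • v i = 0 := by
      have e1 : ∑ i ∈ range (n+1), G i • v i = ∑ i ∈ F, G i • v i := by
        refine (Finset.sum_subset (filter_subset _ _) ?_).symm
        intro x hx hxF
        rw [hGoff x hxF, zero_smul]
      calc ∑ i ∈ range (n+1), lam' i • v i
          = ∑ i ∈ range (n+1), (lam i • v i + t • (G i • v i)) := by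
            refine Finset.sum_congr rfl fun i _ => ?_
            rw [hlam', add_smul, mul_smul]
        _ = (∑ i ∈ range (n+1), lam i • v i) + t • (∑ i ∈ range (n+1), G i • v i) := by
            rw [Finset.sum_add_distrib, Finset.smul_sum]
        _ = 0 := by rw [hsum1, e1, hGsum, smul_zero, add_zero]
    -- one index gets fixed
    obtain ⟨i₀, hi₀F', hti₀⟩ := Finset.exists_mem_eq_inf' hne q
    have hi₀F : i₀ ∈ F := (mem_filter.mp hi₀F').1
    have hG₀ : G i₀ ≠ 0 := (mem_filter.mp hi₀F').2
    have hfix : |lam' i₀| = 1 := by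
      have hval : lam' i₀ = lam i₀ + q i₀ * G i₀ := by simp only [hlam']; rw [ht, hti₀]
      by_cases hgt : 0 < G i₀
      · rw [hval]
        simp only [hq, if_pos hgt]
        rw [div_mul_cancel₀ _ (ne_of_gt hgt)]
        norm_num
      · have hlt : G i₀ < 0 := lt_of_le_of_ne (not_lt.mp hgt) hG₀
        rw [hval]
        simp only [hq, if_neg hgt]
        rw [div_mul_cancel₀ _ (ne_of_lt hlt)]
        norm_num
    have hsub : fracSet lam' (n+1) ⊆ F := by
      intro i hi
      simp only [fracSet, mem_filter, mem_range] at hi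
      by_contra hiF
      rw [hoff i hiF] at hi
      exact hiF (by rw [hF, mem_filter, mem_range]; exact hi)
    have hnotin : i₀ ∉ fracSet lam' (n+1) := by
      simp only [fracSet, mem_filter, mem_range]
      rintro ⟨-, habs⟩
      rw [hfix] at habs
      exact lt_irrefl _ habs
    have hcard' : (fracSet lam' (n+1)).card ≤ 2 := by
      have hlt : (fracSet lam' (n+1)).card < F.card :=
        Finset.card_lt_card ((Finset.ssubset_iff_of_subset hsub).mpr ⟨i₀, hi₀F, hnotin⟩)
      omega
    have h4' : ∀ i, n+1 ≤ i → lam' i = 0 := by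
      intro i hi
      have hiF : i ∉ F := by
        rw [hF, mem_filter, mem_range]
        rintro ⟨h', -⟩
        omega
      rw [hoff i hiF]
      exact h4 i (by omega)
    refine ⟨lam', ⟨hb, hsum', hcard', h4'⟩, ?_⟩
    intro i hi
    apply hoff
    rw [hF, mem_filter]
    rintro ⟨-, habs⟩
    rw [hi] at habs
    exact lt_irrefl _ habs

noncomputable def chain (v : ℕ → ℂ) : (n : ℕ) → {lam : ℕ → ℝ // SInv v n lam}
  | 0 => ⟨fun _ => 0, sinv_zero v⟩
  | n+1 => ⟨Classical.choose (step_ex v n (chain v n).1 (chain v n).2),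
           (Classical.choose_spec (step_ex v n (chain v n).1 (chain v n).2)).1⟩

lemma chain_persist1 (v : ℕ → ℂ) (n : ℕ) :
    ∀ i, |(chain v n).1 i| = 1 → (chain v (n+1)).1 i = (chain v n).1 i :=
  (Classical.choose_spec (step_ex v n (chain v n).1 (chain v n).2)).2

lemma chain_persist (v : ℕ → ℂ) {n m : ℕ} (h : n ≤ m) :
    ∀ i, |(chain v n).1 i| = 1 → (chain v m).1 i = (chain v n).1 i := by
  induction m, h using Nat.le_induction with
  | base => intro i _; rfl
  | succ m hm ih =>
    intro i hi
    have e := ih i hi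
    have h1 : |(chain v m).1 i| = 1 := by rw [e]; exact hi
    rw [chain_persist1 v m i h1, e]

open scoped Classical in
noncomputable def sgn (v : ℕ → ℂ) (i : ℕ) : ℝ :=
  if h : ∃ n, |(chain v n).1 i| = 1 then (chain v (Classical.choose h)).1 i else 1

lemma sgn_pm (v : ℕ → ℂ) (i : ℕ) : sgn v i = 1 ∨ sgn v i = -1 := by
  unfold sgn
  split
  · next h => exact (abs_eq (by norm_num)).mp (Classical.choose_spec h)
  · exact Or.inl rfl

lemma sgn_agree (v : ℕ → ℂ) {n i : ℕ} (h : |(chain v n).1 i| = 1) :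
    sgn v i = (chain v n).1 i := by
  unfold sgn
  rw [dif_pos ⟨n, h⟩]
  have h' := Classical.choose_spec (⟨n, h⟩ : ∃ n, |(chain v n).1 i| = 1)
  set n' := Classical.choose (⟨n, h⟩ : ∃ n, |(chain v n).1 i| = 1) with hn'
  have e1 : (chain v (max n n')).1 i = (chain v n').1 i :=
    chain_persist v (le_max_right n n') i h'
  have e2 : (chain v (max n n')).1 i = (chain v n).1 i :=
    chain_persist v (le_max_left n n') i h
  rw [← e1, e2]

lemma sgn_abs (v : ℕ → ℂ) (i : ℕ) : |sgn v i| = 1 := by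
  rcases sgn_pm v i with h | h <;> rw [h] <;> norm_num

theorem BG (v : ℕ → ℂ) (δ : ℝ) (hδ : 0 ≤ δ) (hv : ∀ i, NN (v i) ≤ δ) :
    ∃ ε : ℕ → ℝ, (∀ i, ε i = 1 ∨ ε i = -1) ∧
      ∀ n, NN (∑ i ∈ range n, ε i • v i) ≤ 4 * δ := by
  classical
  refine ⟨sgn v, fun i => sgn_pm v i, fun n => ?_⟩
  obtain ⟨h1, h2, h3, -⟩ := (chain v n).2
  set lam := (chain v n).1 with hlam
  have key : ∑ i ∈ range n, sgn v i • v i = ∑ i ∈ fracSet lam n, (sgn v i - lam i) • v i := by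
    have e1 : ∑ i ∈ range n, sgn v i • v i
        = ∑ i ∈ range n, (sgn v i - lam i) • v i := by
      have : ∑ i ∈ range n, sgn v i • v i
          = (∑ i ∈ range n, (sgn v i - lam i) • v i) + ∑ i ∈ range n, lam i • v i := by
        rw [← Finset.sum_add_distrib]
        refine Finset.sum_congr rfl fun i _ => ?_
        rw [← add_smul]
        ring_nf
      rw [this, h2, add_zero]
    rw [e1]
    refine (Finset.sum_subset (filter_subset _ _) ?_).symm
    intro x hx hxfrac
    have hle : |lam x| ≤ 1 := h1 x
    have hnotlt : ¬ |lam x| < 1 := by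
      intro hlt
      exact hxfrac (by simp only [fracSet, mem_filter]; exact ⟨hx, hlt⟩)
    have heq : |lam x| = 1 := le_antisymm hle (not_lt.mp hnotlt)
    rw [sgn_agree v heq, sub_self, zero_smul]
  rw [key]
  have hbound : ∀ i ∈ fracSet lam n, NN ((sgn v i - lam i) • v i) ≤ 2 * δ := by
    intro i _
    refine le_trans (NN_smul_le _ _) ?_
    have habs : |sgn v i - lam i| ≤ 2 := by
      have ha := abs_sub (sgn v i) (lam i)
      have hb := h1 i
      have hcc := sgn_abs v i
      linarith
    exact mul_le_mul habs (hv i) (NN_nonneg _) (by norm_num)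
  have hcard : ((fracSet lam n).card : ℝ) ≤ 2 := by exact_mod_cast h3
  calc NN (∑ i ∈ fracSet lam n, (sgn v i - lam i) • v i)
      ≤ ∑ i ∈ fracSet lam n, NN ((sgn v i - lam i) • v i) := NN_sum _
    _ ≤ ∑ _i ∈ fracSet lam n, (2 * δ) := Finset.sum_le_sum hbound
    _ = (fracSet lam n).card * (2 * δ) := by rw [Finset.sum_const, nsmul_eq_mul]
    _ ≤ 2 * (2 * δ) := by nlinarith
    _ = 4 * δ := by ring

end SignSeries

theorem stmt_3 (c : ℕ → ℂ) (hc : Tendsto c atTop (𝓝 0)) :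
    ∃ x : ℕ → ℝ, (∀ n, x n = 1 ∨ x n = -1) ∧
      ∃ z : ℂ,
        Tendsto (fun N => ∑ n ∈ Finset.range N, (x n : ℂ) * c n) atTop (𝓝 z) ∧
        max |z.re| |z.im| ≤ 5 * ⨆ n, max |(c n).re| |(c n).im| := by
  classical
  have hNcont : Continuous NN := by
    unfold NN
    exact (continuous_abs.comp Complex.continuous_re).max
      (continuous_abs.comp Complex.continuous_im)
  have hcN : Tendsto (fun n => NN (c n)) atTop (𝓝 0) := by
    have h := (hNcont.tendsto 0).comp hc
    rw [NN_zero] at h; exact h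
  set M : ℝ := ⨆ n, max |(c n).re| |(c n).im| with hM
  have hbdd : BddAbove (Set.range fun n => NN (c n)) := hcN.bddAbove_range
  have hle : ∀ n, NN (c n) ≤ M := fun n => le_ciSup hbdd n
  have hM0 : 0 ≤ M := le_trans (NN_nonneg (c 0)) (hle 0)
  by_cases hMz : M = 0
  · have hczero : ∀ n, c n = 0 := by
      intro n
      have h := hle n
      rw [hMz] at h
      have h1 : |(c n).re| ≤ 0 := le_trans (le_max_left _ _) h
      have h2 : |(c n).im| ≤ 0 := le_trans (le_max_right _ _) h
      have h1' : (c n).re = 0 := abs_eq_zero.mp (le_antisymm h1 (abs_nonneg _))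
      have h2' : (c n).im = 0 := abs_eq_zero.mp (le_antisymm h2 (abs_nonneg _))
      exact Complex.ext h1' h2'
    refine ⟨fun _ => 1, fun n => Or.inl rfl, 0, ?_, ?_⟩
    · have he : (fun N => ∑ n ∈ Finset.range N, (((1:ℝ)) : ℂ) * c n) = fun _ => (0:ℂ) := by
        funext N
        rw [Finset.sum_eq_zero]
        intro i _
        rw [hczero i, mul_zero]
      rw [he]
      exact tendsto_const_nhds
    · simp [hMz]
  · have hMpos : 0 < M := lt_of_le_of_ne hM0 (Ne.symm hMz)
    set δ : ℕ → ℝ := fun j => M / 5 ^ j with hδ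
    have hδpos : ∀ j, 0 < δ j := by
      intro j
      simp only [hδ]
      positivity
    have hδeq : ∀ j, δ j = M * (1/5:ℝ)^j := by
      intro j
      simp only [hδ]
      rw [div_eq_mul_inv, ← inv_pow, ← one_div]
    have hex : ∀ j : ℕ, ∃ K : ℕ, ∀ n, K ≤ n → NN (c n) ≤ δ j := by
      intro j
      have h' : ∀ᶠ n in atTop, NN (c n) < δ j := hcN.eventually_lt_const (hδpos j)
      obtain ⟨K, hK⟩ := Filter.eventually_atTop.mp h'
      exact ⟨K, fun n hn => (hK n hn).le⟩
    choose K hK using hex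
    set φ : ℕ → ℕ := fun j => (Nat.rec 0 (fun j' ih => max (K (j'+1)) (ih + 1)) j : ℕ) with hφdef
    have hφ0 : φ 0 = 0 := rfl
    have hφs : ∀ j, φ (j+1) = max (K (j+1)) (φ j + 1) := fun j => rfl
    have hφmono : ∀ j, φ j < φ (j+1) := by
      intro j
      rw [hφs j]
      exact lt_of_lt_of_le (Nat.lt_succ_self _) (le_max_right _ _)
    have hφstrict : StrictMono φ := strictMono_nat_of_lt_succ hφmono
    have hφself : ∀ j, j ≤ φ j := by
      intro j
      induction j with
      | zero => exact Nat.zero_le _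
      | succ j ih => have := hφmono j; omega
    have hφbound : ∀ j i, φ j ≤ i → NN (c i) ≤ δ j := by
      intro j i hij
      cases j with
      | zero =>
        have hδ0 : δ 0 = M := by simp [hδ]
        rw [hδ0]
        exact hle i
      | succ j' =>
        have hKle : K (j'+1) ≤ i := le_trans (by rw [hφs]; exact le_max_left _ _) hij
        exact hK (j'+1) i hKle
    set w : ℕ → ℕ → ℂ := fun j k => if φ j + k < φ (j+1) then c (φ j + k) else 0 with hw
    have hwbound : ∀ j k, NN (w j k) ≤ δ j := by
      intro j k
      simp only [hw]
      split
      · exact hφbound j _ (Nat.le_add_right _ _)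
      · rw [NN_zero]; exact (hδpos j).le
    have hBG := fun j => BG (w j) (δ j) (hδpos j).le (hwbound j)
    choose ε hε1 hε2 using hBG
    set J : ℕ → ℕ := fun n => Nat.findGreatest (fun j => φ j ≤ n) n with hJdef
    have hJ1 : ∀ n, φ (J n) ≤ n := by
      intro n
      simp only [hJdef]
      exact Nat.findGreatest_spec (P := fun j => φ j ≤ n) (Nat.zero_le n)
        (by show φ 0 ≤ n; rw [hφ0]; exact Nat.zero_le n)
    have hJ2 : ∀ n, n < φ (J n + 1) := by
      intro n
      by_contra hcon
      push_neg at hcon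
      have h1 : J n + 1 ≤ n := le_trans (hφself _) hcon
      have h2 : J n + 1 ≤ J n := by
        conv_rhs => simp only [hJdef]
        exact Nat.le_findGreatest (P := fun j => φ j ≤ n) h1 hcon
      omega
    have hJ3 : ∀ j n, φ j ≤ n → n < φ (j+1) → J n = j := by
      intro j n h1 h2
      have hub : J n ≤ j := by
        by_contra h
        push_neg at h
        have h3 : φ (j+1) ≤ φ (J n) := hφstrict.monotone h
        have h4 := hJ1 n
        omega
      have hlb : j ≤ J n := by
        simp only [hJdef]
        exact Nat.le_findGreatest (P := fun j' => φ j' ≤ n) (le_trans (hφself j) h1) h1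
      omega
    set x : ℕ → ℝ := fun i => ε (J i) (i - φ (J i)) with hx
    have hx1 : ∀ i, x i = 1 ∨ x i = -1 := fun i => hε1 _ _
    have hblock : ∀ j k, φ j + k ≤ φ (j+1) →
        ∑ i ∈ Finset.Ico (φ j) (φ j + k), (x i : ℂ) * c i
          = ∑ i ∈ Finset.range k, ε j i • w j i := by
      intro j k hk
      rw [Finset.sum_Ico_eq_sum_range]
      simp only [Nat.add_sub_cancel_left]
      refine Finset.sum_congr rfl fun i hi => ?_
      rw [Finset.mem_range] at hi
      have hlt : φ j + i < φ (j+1) := by omega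
      have hJi : J (φ j + i) = j := hJ3 j _ (Nat.le_add_right _ _) hlt
      simp only [hx, hw]
      rw [hJi]
      simp only [Nat.add_sub_cancel_left]
      rw [if_pos hlt]
      exact Complex.real_smul.symm
    set S : ℕ → ℂ := fun n => ∑ i ∈ Finset.range n, (x i : ℂ) * c i with hS
    set T : ℕ → ℂ := fun j => S (φ j) with hT
    have hNT : ∀ j, NN (T (j+1) - T j) ≤ 4 * δ j := by
      intro j
      have hmle : φ j ≤ φ (j+1) := (hφmono j).le
      have e : T (j+1) - T j = ∑ i ∈ Finset.Ico (φ j) (φ (j+1)), (x i : ℂ) * c i := by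
        simp only [hT, hS]
        rw [Finset.sum_Ico_eq_sub _ hmle]
      have hlen : φ j + (φ (j+1) - φ j) = φ (j+1) := by omega
      have hb := hblock j (φ (j+1) - φ j) (by omega)
      rw [hlen] at hb
      rw [e, hb]
      exact hε2 j _
    have hSpart : ∀ n, NN (S n - T (J n)) ≤ 4 * δ (J n) := by
      intro n
      have h1 := hJ1 n
      have h2 := hJ2 n
      have e : S n - T (J n) = ∑ i ∈ Finset.Ico (φ (J n)) n, (x i : ℂ) * c i := by
        simp only [hT, hS]
        rw [Finset.sum_Ico_eq_sub _ h1]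
      have hlen : φ (J n) + (n - φ (J n)) = n := by omega
      have hb := hblock (J n) (n - φ (J n)) (by omega)
      rw [hlen] at hb
      rw [e, hb]
      exact hε2 _ _
    have hdist : ∀ j, dist (T j) (T (j+1)) ≤ (8 * M) * (1/5:ℝ)^j := by
      intro j
      rw [dist_eq_norm, norm_sub_rev]
      calc ‖T (j+1) - T j‖ = ‖T (j+1) - T j‖ := rfl
        _ ≤ 2 * NN (T (j+1) - T j) := abs_le_two_NN _
        _ ≤ 2 * (4 * δ j) := mul_le_mul_of_nonneg_left (hNT j) (by norm_num)
        _ = (8 * M) * (1/5:ℝ)^j := by rw [hδeq]; ring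
    have hcauchy : CauchySeq T :=
      cauchySeq_of_le_geometric (1/5) (8*M) (by norm_num) hdist
    obtain ⟨z, hz⟩ := cauchySeq_tendsto_of_complete hcauchy
    have hJtop : Tendsto J atTop atTop := by
      refine Filter.tendsto_atTop.mpr fun b => ?_
      refine Filter.eventually_atTop.mpr ⟨φ b, fun n hn => ?_⟩
      simp only [hJdef]
      exact Nat.le_findGreatest (P := fun j => φ j ≤ n) (le_trans (hφself b) hn) hn
    have hgeo : Tendsto (fun j : ℕ => (8*M) * (1/5:ℝ)^j) atTop (𝓝 0) := by
      rw [show (0:ℝ) = (8*M) * 0 by ring]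
      exact (tendsto_pow_atTop_nhds_zero_of_lt_one (by norm_num) (by norm_num)).const_mul _
    have hmain : Tendsto S atTop (𝓝 z) := by
      have hA : Tendsto (fun n => dist (S n) (T (J n))) atTop (𝓝 0) := by
        have hcomp := hgeo.comp hJtop
        refine squeeze_zero (fun n => dist_nonneg) (fun n => ?_) hcomp
        rw [dist_eq_norm]
        calc ‖S n - T (J n)‖ = ‖S n - T (J n)‖ := rfl
          _ ≤ 2 * NN (S n - T (J n)) := abs_le_two_NN _
          _ ≤ 2 * (4 * δ (J n)) := mul_le_mul_of_nonneg_left (hSpart n) (by norm_num)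
          _ = (8 * M) * (1/5:ℝ)^(J n) := by rw [hδeq]; ring
      have hB : Tendsto (fun n => dist (T (J n)) z) atTop (𝓝 0) := by
        have h1 : Tendsto (fun j => dist (T j) z) atTop (𝓝 0) :=
          (tendsto_iff_dist_tendsto_zero).mp hz
        exact h1.comp hJtop
      rw [tendsto_iff_dist_tendsto_zero]
      refine squeeze_zero (fun n => dist_nonneg)
        (fun n => dist_triangle (S n) (T (J n)) z) ?_
      rw [show (0:ℝ) = 0 + 0 by ring]
      exact hA.add hB
    have hTb : ∀ j, NN (T j) ≤ ∑ j' ∈ Finset.range j, 4 * δ j' := by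
      intro j
      induction j with
      | zero =>
        have hT0 : T 0 = 0 := by simp [hT, hS, hφ0]
        rw [hT0, NN_zero]
        simp
      | succ j ih =>
        have hsplit : T (j+1) = T j + (T (j+1) - T j) := by ring
        calc NN (T (j+1)) = NN (T j + (T (j+1) - T j)) := by rw [← hsplit]
          _ ≤ NN (T j) + NN (T (j+1) - T j) := NN_add _ _
          _ ≤ (∑ j' ∈ Finset.range j, 4 * δ j') + 4 * δ j := add_le_add ih (hNT j)
          _ = ∑ j' ∈ Finset.range (j+1), 4 * δ j' := (Finset.sum_range_succ _ _).symm
    have hgeosum : ∀ j, ∑ j' ∈ Finset.range j, 4 * δ j' ≤ 5 * M := by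
      intro j
      have e : ∑ j' ∈ Finset.range j, 4 * δ j' = 4 * M * ∑ j' ∈ Finset.range j, (1/5:ℝ)^j' := by
        rw [Finset.mul_sum]
        exact Finset.sum_congr rfl fun i _ => by rw [hδeq]; ring
      rw [e]
      have hsum : ∑ j' ∈ Finset.range j, (1/5:ℝ)^j' ≤ 5/4 := by
        have hgs := geom_sum_eq (by norm_num : (1/5:ℝ) ≠ 1) j
        have hp : (0:ℝ) ≤ (1/5:ℝ)^j := by positivity
        rw [hgs, div_le_iff_of_neg (by norm_num : (1/5:ℝ) - 1 < 0)]
        linarith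
      nlinarith
    have hNz : NN z ≤ 5 * M := by
      have hTz : Tendsto (fun j => NN (T j)) atTop (𝓝 (NN z)) := (hNcont.tendsto z).comp hz
      exact le_of_tendsto hTz
        (Filter.Eventually.of_forall fun j => le_trans (hTb j) (hgeosum j))
    exact ⟨x, hx1, z, hmain, hNz⟩
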